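/- A set function η: {0,…,n} → {0,…,m} inducing a strong map of matroids G → G' (so that the image of every circuit of G is dependent in G') induces a well-defined graded algebra homomorphism A(G) → A(G') sending a_i to a_{η(i)}. -/

import Mathlib

open ExteriorAlgebra

variable (K : Type*) [Field K] {n : ℕ}

/-- The generator `e i` of the exterior algebra `E = Λ(e_1,…,e_n)`. -/
noncomputable def gen (i : Fin n) : ExteriorAlgebra K (Fin n → K) :=
  ι K (Pi.single i 1)

/-- The monomial `e_S = e_{i_1} ∧ ⋯ ∧ e_{i_p}` for a tuple `S` given as a list. -/
noncomputable def eS (l : List (Fin n)) : ExteriorAlgebra K (Fin n → K) :=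
  (l.map (gen K)).prod

/-- `D` is the boundary map `∂`: it is linear and satisfies
`∂(e_{i_1} ∧ ⋯ ∧ e_{i_p}) = ∑ k (-1)^{k-1} e_{i_1} ∧ ⋯ ∧ ê_{i_k} ∧ ⋯ ∧ e_{i_p}`
(indexing the sum from `0`, the sign of the `k`-th term is `(-1)^k`). -/
def IsBoundary (D : ExteriorAlgebra K (Fin n → K) →ₗ[K] ExteriorAlgebra K (Fin n → K)) :
    Prop :=
  ∀ l : List (Fin n),
    D (eS K l) = ∑ k : Fin l.length, ((-1 : K) ^ (k : ℕ)) • eS K (l.eraseIdx k)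

/-- A circuit of a matroid: a minimal dependent set. -/
def IsCircuit {α : Type*} (M : Matroid α) (C : Set α) : Prop :=
  M.Dep C ∧ ∀ C' ⊂ C, ¬ M.Dep C'

/-- A simple matroid: every subset with at most two elements is independent
(no loops and no parallel points). -/
def MatroidSimple {α : Type*} (M : Matroid α) : Prop :=
  ∀ i j : α, M.Indep {i, j}

/-- The Orlik–Solomon ideal `I` of a matroid `G`: the ideal of the exterior algebra
generated by the boundaries `∂ e_S` of dependent tuples `S`. -/
noncomputable def OSIdeal (M : Matroid (Fin n))
    (D : ExteriorAlgebra K (Fin n → K) →ₗ[K] ExteriorAlgebra K (Fin n → K)) :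
    TwoSidedIdeal (ExteriorAlgebra K (Fin n → K)) :=
  TwoSidedIdeal.span
    {x | ∃ l : List (Fin n), l.Nodup ∧ M.Dep {i | i ∈ l} ∧ x = D (eS K l)}

/-- The defining relation of the Orlik–Solomon algebra `A(G) = E/I`:
each generator `∂ e_S` (`S` dependent) is set to zero. -/
def OSRel (M : Matroid (Fin n))
    (D : ExteriorAlgebra K (Fin n → K) →ₗ[K] ExteriorAlgebra K (Fin n → K)) :
    ExteriorAlgebra K (Fin n → K) → ExteriorAlgebra K (Fin n → K) → Prop :=
  fun x y => y = 0 ∧ ∃ l : List (Fin n), l.Nodup ∧ M.Dep {i | i ∈ l} ∧ x = D (eS K l)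

/-- The Orlik–Solomon algebra `A(G) = E/I`. -/
noncomputable abbrev OSAlgebra (M : Matroid (Fin n))
    (D : ExteriorAlgebra K (Fin n → K) →ₗ[K] ExteriorAlgebra K (Fin n → K)) :=
  RingQuot (OSRel K M D)

/-- The image `a_i` of the generator `e_i` in the Orlik–Solomon algebra. -/
noncomputable def aGen (M : Matroid (Fin n))
    (D : ExteriorAlgebra K (Fin n → K) →ₗ[K] ExteriorAlgebra K (Fin n → K))
    (i : Fin n) : OSAlgebra K M D :=
  RingQuot.mkAlgHom K (OSRel K M D) (gen K i)

/-! ### Auxiliary lemmas -/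

theorem eraseIdx_map' {α β : Type*} (f : α → β) (l : List α) (k : ℕ) :
    (l.map f).eraseIdx k = (l.eraseIdx k).map f := by
  induction l generalizing k with
  | nil => simp
  | cons a t ih =>
    cases k with
    | zero => simp
    | succ k => simp [List.eraseIdx, ih]

theorem gen_anticomm (i j : Fin n) : gen K i * gen K j = - (gen K j * gen K i) := by
  have := ι_add_mul_swap (R := K) (M := Fin n → K) (Pi.single i 1) (Pi.single j 1)
  unfold gen
  exact eq_neg_of_add_eq_zero_left this

theorem gen_mul_eS (i : Fin n) (l : List (Fin n)) :
    gen K i * eS K l = ((-1 : K) ^ l.length) • (eS K l * gen K i) := by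
  induction l with
  | nil => simp [eS]
  | cons a t ih =>
    have h1 : eS K (a :: t) = gen K a * eS K t := by simp [eS]
    rw [h1, ← mul_assoc, gen_anticomm K i a, neg_mul, mul_assoc, ih]
    rw [mul_smul_comm, ← mul_assoc]
    simp [pow_succ, mul_smul, mul_comm]

theorem eS_eq_zero_of_dup (l : List (Fin n)) (h : ¬ l.Nodup) : eS K l = 0 := by
  induction l with
  | nil => simp at h
  | cons a t ih =>
    rw [List.nodup_cons] at h
    push_neg at h
    by_cases ht : t.Nodup
    · have ha : a ∈ t := by by_contra hc; exact h hc ht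
      obtain ⟨s, u, rfl⟩ := List.append_of_mem ha
      have : eS K (a :: (s ++ a :: u)) = gen K a * (eS K s * (gen K a * eS K u)) := by
        simp [eS, List.map_append, List.prod_append, mul_assoc]
      have hz : gen K a * gen K a = 0 := by
        simpa [gen] using ι_sq_zero (R := K) (M := Fin n → K) (Pi.single a (1:K))
      calc eS K (a :: (s ++ a :: u))
          = (gen K a * eS K s) * (gen K a * eS K u) := by rw [this, mul_assoc]
        _ = ((-1:K)^s.length • (eS K s * gen K a)) * (gen K a * eS K u) := by
            rw [gen_mul_eS]
        _ = (-1:K)^s.length • (eS K s * ((gen K a * gen K a) * eS K u)) := by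
            rw [smul_mul_assoc, mul_assoc, mul_assoc, ← mul_assoc (gen K a)]
        _ = 0 := by rw [hz]; simp
    · have : eS K (a :: t) = gen K a * eS K t := by simp [eS]
      rw [this, ih ht, mul_zero]

noncomputable def etaLin {m : ℕ} (η : Fin n → Fin m) : (Fin n → K) →ₗ[K] (Fin m → K) :=
  (Matrix.of fun j i => if η i = j then (1:K) else 0).mulVecLin

theorem etaLin_single {m : ℕ} (η : Fin n → Fin m) (i : Fin n) :
    etaLin K η (Pi.single i 1) = Pi.single (η i) 1 := by
  ext j
  simp [etaLin, Matrix.mulVec_single, Pi.single_apply, eq_comm]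

noncomputable def etaHat {m : ℕ} (η : Fin n → Fin m) :
    ExteriorAlgebra K (Fin n → K) →ₐ[K] ExteriorAlgebra K (Fin m → K) :=
  ExteriorAlgebra.lift K ⟨(ι K).comp (etaLin K η), fun v => by
    simpa using ι_sq_zero (R := K) (M := Fin m → K) (etaLin K η v)⟩

theorem etaHat_gen {m : ℕ} (η : Fin n → Fin m) (i : Fin n) :
    etaHat K η (gen K i) = gen K (η i) := by
  simp [etaHat, gen, etaLin_single]

theorem etaHat_eS {m : ℕ} (η : Fin n → Fin m) (l : List (Fin n)) :
    etaHat K η (eS K l) = eS K (l.map η) := by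
  unfold eS
  rw [map_list_prod, List.map_map, List.map_map]
  congr 1
  exact List.map_congr_left fun a _ => etaHat_gen K η a

theorem etaHat_D {m : ℕ} (η : Fin n → Fin m)
    (D : ExteriorAlgebra K (Fin n → K) →ₗ[K] ExteriorAlgebra K (Fin n → K))
    (hD : IsBoundary K D)
    (D' : ExteriorAlgebra K (Fin m → K) →ₗ[K] ExteriorAlgebra K (Fin m → K))
    (hD' : IsBoundary K D') (l : List (Fin n)) :
    etaHat K η (D (eS K l)) = D' (eS K (l.map η)) := by
  rw [hD l, hD' (l.map η), map_sum]
  have h1 : ∀ k : Fin l.length,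
      etaHat K η (((-1:K)^(k:ℕ)) • eS K (l.eraseIdx k))
        = ((-1:K)^(k:ℕ)) • eS K ((l.map η).eraseIdx k) := by
    intro k
    rw [map_smul, etaHat_eS, eraseIdx_map']
  rw [Finset.sum_congr rfl fun k _ => h1 k]
  rw [Fin.sum_univ_eq_sum_range (fun k => ((-1:K)^k) • eS K ((l.map η).eraseIdx k)) l.length,
    Fin.sum_univ_eq_sum_range (fun k => ((-1:K)^k) • eS K ((l.map η).eraseIdx k)) (l.map η).length,
    List.length_map]

theorem dep_contains_circuit {M : Matroid (Fin n)} {S : Set (Fin n)} (hS : M.Dep S) :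
    ∃ C ⊆ S, IsCircuit M C := by
  obtain ⟨C, ⟨hCS, hCdep⟩, hmin⟩ :=
    Set.Finite.exists_minimalFor id {C : Set (Fin n) | C ⊆ S ∧ M.Dep C}
      (Set.toFinite _) ⟨S, subset_rfl, hS⟩
  refine ⟨C, hCS, hCdep, fun C' hC' hC'dep => ?_⟩
  have := hmin (j := C') ⟨hC'.subset.trans hCS, hC'dep⟩ hC'.subset
  exact (ssubset_iff_subset_not_subset.mp hC').2 this


/-- a set function `η` inducing a strong map `G → G'` (the image of every
circuit of `G` is dependent in `G'`) induces a well-defined algebra homomorphism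
`A(G) → A(G')` sending `a_i` to `a_{η(i)}`. -/
theorem strong_map_induces_OS_hom {m : ℕ}
    (M : Matroid (Fin n)) (hE : M.E = Set.univ) (hsimple : MatroidSimple M)
    (M' : Matroid (Fin m)) (hE' : M'.E = Set.univ) (hsimple' : MatroidSimple M')
    (D : ExteriorAlgebra K (Fin n → K) →ₗ[K] ExteriorAlgebra K (Fin n → K))
    (hD : IsBoundary K D)
    (D' : ExteriorAlgebra K (Fin m → K) →ₗ[K] ExteriorAlgebra K (Fin m → K))
    (hD' : IsBoundary K D')
    (η : Fin n → Fin m)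
    (hη : ∀ C : Set (Fin n), IsCircuit M C → M'.Dep (η '' C)) :
    ∃ F : OSAlgebra K M D →ₐ[K] OSAlgebra K M' D',
      ∀ i : Fin n, F (aGen K M D i) = aGen K M' D' (η i) := by
  set φ : ExteriorAlgebra K (Fin n → K) →ₐ[K] OSAlgebra K M' D' :=
    (RingQuot.mkAlgHom K (OSRel K M' D')).comp (etaHat K η) with hφ
  have w : ∀ ⦃x y⦄, OSRel K M D x y → φ x = φ y := by
    rintro x y ⟨rfl, l, hnd, hdep, rfl⟩
    have hmap0 : φ 0 = 0 := map_zero φ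
    rw [hmap0, hφ, AlgHom.comp_apply, etaHat_D K η D hD D' hD' l]
    by_cases hnd' : (l.map η).Nodup
    · -- image list nodup : its underlying set is dependent in M'
      obtain ⟨C, hCS, hC⟩ := dep_contains_circuit hdep
      have hdepC : M'.Dep (η '' C) := hη C hC
      have hsub : η '' C ⊆ {i | i ∈ l.map η} := by
        rintro j ⟨i, hiC, rfl⟩
        exact List.mem_map.mpr ⟨i, hCS hiC, rfl⟩
      have hdep' : M'.Dep {i | i ∈ l.map η} :=
        hdepC.superset hsub (by rw [hE']; exact Set.subset_univ _)
      have hrel : OSRel K M' D' (D' (eS K (l.map η))) 0 :=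
        ⟨rfl, l.map η, hnd', hdep', rfl⟩
      rw [RingQuot.mkAlgHom_rel K hrel, map_zero]
    · rw [eS_eq_zero_of_dup K _ hnd', map_zero, map_zero]
  refine ⟨RingQuot.liftAlgHom K ⟨φ, w⟩, fun i => ?_⟩
  rw [aGen, RingQuot.liftAlgHom_mkAlgHom_apply, hφ, AlgHom.comp_apply, etaHat_gen]
  rfl
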